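/- For every positive integer n, there exist n pairwise distinct pairs of integers (p₁,q₁), ..., (pₙ,qₙ) such that p_i² + 12q_i² = p_j² + 12q_j² for all i, j, where each p_i and q_i are coprime, 4 divides each p_i, and 3 does not divide any p_i. -/

import Mathlib

private lemma even_reduce {p m : ℕ} (hp : p % 2 = 1) {x y : ℤ}
    (hx : x % 2 = 0) (hy : y % 2 = 0) (h : x ^ 2 + 3 * y ^ 2 = m * p) :
    ∃ m' : ℕ, m = 4 * m' ∧ (x/2) ^ 2 + 3 * (y/2) ^ 2 = m' * p := by
  obtain ⟨s, hs⟩ : ∃ s, x = 2*s := ⟨x/2, by omega⟩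
  obtain ⟨t, ht⟩ : ∃ t, y = 2*t := ⟨y/2, by omega⟩
  have h4 : (4:ℤ) * (s^2+3*t^2) = (m:ℤ) * p := by rw [← h, hs, ht]; ring
  have hdvd : (4:ℕ) ∣ m * p := by
    have : ((4:ℕ):ℤ) ∣ ((m*p : ℕ):ℤ) := by push_cast; exact ⟨s^2+3*t^2, h4.symm⟩
    exact_mod_cast this
  have hcop : Nat.Coprime 4 p := by
    have h2 : Nat.Coprime 2 p := (Nat.Prime.coprime_iff_not_dvd Nat.prime_two).mpr (by omega)
    exact (show (4:ℕ) = 2^2 by norm_num) ▸ Nat.Coprime.pow_left 2 h2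
  obtain ⟨m', rfl⟩ := hcop.dvd_of_dvd_mul_right hdvd
  refine ⟨m', rfl, ?_⟩
  have h6 : (4:ℤ) * (s^2+3*t^2) = 4 * ((m':ℤ) * p) := by rw [h4]; push_cast; ring
  have h5 : s^2+3*t^2 = (m':ℤ) * p := mul_left_cancel₀ (by norm_num : (4:ℤ) ≠ 0) h6
  have hxs : x / 2 = s := by omega
  have hyt : y / 2 = t := by omega
  rw [hxs, hyt]; exact h5

private lemma descent (p : ℕ) (hp : p.Prime) (hp2 : 2 < p) :
    ∀ m : ℕ, 0 < m → m < p → ∀ a b : ℤ, a ^ 2 + 3 * b ^ 2 = m * p →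
      ∃ x y : ℤ, x ^ 2 + 3 * y ^ 2 = p := by
  intro m
  induction m using Nat.strong_induction_on with
  | _ m IH =>
    intro hm0 hmp a b hab
    have hpodd : p % 2 = 1 := Nat.odd_iff.mp (hp.odd_of_ne_two (by omega))
    rcases Nat.lt_or_ge m 2 with hm1 | hm2
    · -- m = 1
      have : m = 1 := by omega
      subst this
      exact ⟨a, b, by rw [hab]; push_cast; ring⟩
    rcases Nat.even_or_odd m with hme | hmo
    · -- m even
      obtain ⟨s, hs | hs⟩ := Int.even_or_odd' a <;> obtain ⟨t, ht | ht⟩ := Int.even_or_odd' b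
      · -- both even
        obtain ⟨m', hm', heq⟩ := even_reduce hpodd (by omega) (by omega) hab
        exact IH m' (by omega) (by omega) (by omega) _ _ heq
      · -- a even, b odd : impossible
        exfalso
        obtain ⟨m₁, hm₁⟩ := hme
        obtain ⟨X, hX⟩ : ∃ X : ℤ, a^2+3*b^2 = 2*X+1 :=
          ⟨2*s^2+6*t^2+6*t+1, by rw [hs, ht]; ring⟩
        obtain ⟨Y, hY⟩ : ∃ Y : ℤ, (m:ℤ)*p = 2*Y := ⟨m₁*p, by rw [hm₁]; push_cast; ring⟩
        rw [hab, hY] at hX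
        omega
      · -- a odd, b even : impossible
        exfalso
        obtain ⟨m₁, hm₁⟩ := hme
        obtain ⟨X, hX⟩ : ∃ X : ℤ, a^2+3*b^2 = 2*X+1 :=
          ⟨2*s^2+2*s+6*t^2, by rw [hs, ht]; ring⟩
        obtain ⟨Y, hY⟩ : ∃ Y : ℤ, (m:ℤ)*p = 2*Y := ⟨m₁*p, by rw [hm₁]; push_cast; ring⟩
        rw [hab, hY] at hX
        omega
      · -- both odd
        have h1 : (s+3*t+2)^2 + 3*(s-t)^2 = (m:ℤ)*p := by rw [← hab, hs, ht]; ring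
        have h2 : (s-3*t-1)^2 + 3*(s+t+1)^2 = (m:ℤ)*p := by rw [← hab, hs, ht]; ring
        rcases Int.even_or_odd (s+3*t+2) with he | ho
        · have hv : (s-t) % 2 = 0 := by
            obtain ⟨k, hk⟩ := he; omega
          obtain ⟨m', hm', heq⟩ := even_reduce hpodd (by obtain ⟨k, hk⟩ := he; omega) hv h1
          exact IH m' (by omega) (by omega) (by omega) _ _ heq
        · have hu : (s-3*t-1) % 2 = 0 := by
            obtain ⟨k, hk⟩ := ho; omega
          have hv : (s+t+1) % 2 = 0 := by obtain ⟨k, hk⟩ := ho; omega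
          obtain ⟨m', hm', heq⟩ := even_reduce hpodd hu hv h2
          exact IH m' (by omega) (by omega) (by omega) _ _ heq
    · -- m odd, m ≥ 3
      obtain ⟨k, hk⟩ := hmo
      have hk6 : 1 ≤ k := by omega
      set c := Int.bmod a m with hcdef
      set d := Int.bmod b m with hddef
      have hca : (m:ℤ) ∣ a - c := by
        simpa [neg_sub] using (Int.dvd_bmod_sub_self (x := a) (m := m)).neg_right
      have hdb : (m:ℤ) ∣ b - d := by
        simpa [neg_sub] using (Int.dvd_bmod_sub_self (x := b) (m := m)).neg_right
      have hcle : c ≤ (k:ℤ) := by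
        have := Int.bmod_le (x := a) (show 0 < m by omega)
        rw [← hcdef] at this; omega
      have hcge : -(k:ℤ) ≤ c := by
        have := Int.le_bmod (x := a) (show 0 < m by omega)
        rw [← hcdef] at this; omega
      have hdle : d ≤ (k:ℤ) := by
        have := Int.bmod_le (x := b) (show 0 < m by omega)
        rw [← hddef] at this; omega
      have hdge : -(k:ℤ) ≤ d := by
        have := Int.le_bmod (x := b) (show 0 < m by omega)
        rw [← hddef] at this; omega
      clear_value c d
      -- m divides c^2+3d^2
      have hmdvd : (m:ℤ) ∣ c^2 + 3*d^2 := by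
        have h1 : (m:ℤ) ∣ (a^2+3*b^2) - (c^2+3*d^2) := by
          have hrw : (a^2+3*b^2) - (c^2+3*d^2) = (a-c)*(a+c) + 3*((b-d)*(b+d)) := by ring
          rw [hrw]
          exact dvd_add (hca.mul_right _) ((hdb.mul_right _).mul_left 3)
        have h2 : (m:ℤ) ∣ a^2+3*b^2 := by rw [hab]; exact Dvd.intro _ rfl
        simpa using dvd_sub h2 h1
      obtain ⟨r, hr⟩ := hmdvd
      have hr0 : 0 < r := by
        rcases lt_or_ge 0 r with h | h
        · exact h
        · exfalso
          have hrle : c^2 + 3*d^2 ≤ 0 := by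
            rw [hr]
            have : (m:ℤ) * r ≤ 0 := mul_nonpos_of_nonneg_of_nonpos (by positivity) (by omega)
            omega
          have hc0 : c = 0 := by nlinarith [sq_nonneg c, sq_nonneg d]
          have hd0 : d = 0 := by nlinarith [sq_nonneg c, sq_nonneg d]
          -- m divides a and b, so m^2 divides m*p, so m divides p
          obtain ⟨a1, ha1⟩ : (m:ℤ) ∣ a := by rw [hc0, sub_zero] at hca; exact hca
          obtain ⟨b1, hb1⟩ : (m:ℤ) ∣ b := by rw [hd0, sub_zero] at hdb; exact hdb
          have : (m:ℤ) * ((m:ℤ)*(a1^2+3*b1^2)) = (m:ℤ) * p := by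
            rw [← hab, ha1, hb1]; ring
          have hdvdp : (m:ℤ) ∣ (p:ℤ) :=
            ⟨a1^2+3*b1^2, (mul_left_cancel₀ (by positivity : (m:ℤ) ≠ 0) this).symm⟩
          have : m ∣ p := Int.ofNat_dvd.mp hdvdp
          rcases (Nat.Prime.eq_one_or_self_of_dvd hp m this) with h | h <;> omega
      have hrm : r < (m:ℤ) := by
        by_contra hge
        push_neg at hge
        have h1 : (m:ℤ)*(m:ℤ) ≤ (m:ℤ)*r := mul_le_mul_of_nonneg_left hge (by positivity)
        have hb1 : c^2 ≤ (k:ℤ)^2 := sq_le_sq' hcge hcle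
        have hb2 : d^2 ≤ (k:ℤ)^2 := sq_le_sq' hdge hdle
        have h2 : (m:ℤ) * r ≤ 4*(k:ℤ)^2 := by rw [← hr]; linarith
        have hmk : (m:ℤ) = 2*(k:ℤ)+1 := by push_cast [hk]; ring
        have h3 : (m:ℤ)*(m:ℤ) = 4*(k:ℤ)^2+4*(k:ℤ)+1 := by rw [hmk]; ring
        have hk1 : (1:ℤ) ≤ (k:ℤ) := by exact_mod_cast hk6
        linarith
      -- build new representation
      have hXdvd : (m:ℤ) ∣ a*c + 3*b*d := by
        have hrw : a*c+3*b*d = c*(a-c) + 3*(d*(b-d)) + (c^2+3*d^2) := by ring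
        rw [hrw, hr]
        exact dvd_add (dvd_add (hca.mul_left _) ((hdb.mul_left _).mul_left 3)) ⟨r, rfl⟩
      have hYdvd : (m:ℤ) ∣ a*d - b*c := by
        have hrw : a*d - b*c = d*(a-c) - c*(b-d) := by ring
        rw [hrw]
        exact dvd_sub (hca.mul_left _) (hdb.mul_left _)
      obtain ⟨X, hX⟩ := hXdvd
      obtain ⟨Y, hY⟩ := hYdvd
      have key : (m:ℤ)^2 * (X^2+3*Y^2) = (m:ℤ)^2 * (r*p) := by
        have id1 : (a*c+3*b*d)^2 + 3*(a*d-b*c)^2 = (a^2+3*b^2)*(c^2+3*d^2) := by ring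
        rw [hab, hr, hX, hY] at id1
        linear_combination id1
      have hXY : X^2+3*Y^2 = r * p :=
        mul_left_cancel₀ (by positivity : ((m:ℤ))^2 ≠ 0) key
      obtain ⟨rn, hrn⟩ : ∃ rn : ℕ, r = (rn:ℤ) := ⟨r.toNat, (Int.toNat_of_nonneg hr0.le).symm⟩
      refine IH rn ?_ ?_ ?_ X Y ?_
      · omega
      · omega
      · omega
      · rw [hXY, hrn]

private lemma exists_sqrt_neg3 (p : ℕ) (hp : p.Prime) (h3 : p % 3 = 1) :
    ∃ t : ℤ, (p:ℤ) ∣ t^2 + 3 := by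
  haveI : Fact p.Prime := ⟨hp⟩
  have hcard : 3 ∣ Fintype.card (ZMod p)ˣ := by
    rw [ZMod.card_units_eq_totient, Nat.totient_prime hp]
    omega
  haveI : Fact (Nat.Prime 3) := ⟨by norm_num⟩
  obtain ⟨z, hz⟩ := exists_prime_orderOf_dvd_card 3 hcard
  set w : ZMod p := (z : ZMod p) with hw
  have hw3 : w^3 = 1 := by
    have : z^3 = 1 := by rw [← hz]; exact pow_orderOf_eq_one z
    rw [hw, ← Units.val_pow_eq_pow_val, this, Units.val_one]
  have hw1 : w ≠ 1 := by
    intro h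
    rw [hw] at h
    have : z = 1 := Units.val_eq_one.mp h
    rw [this] at hz
    simp at hz
  have hq : w^2 + w + 1 = 0 := by
    have hfac : (w - 1) * (w^2 + w + 1) = 0 := by
      have : (w - 1) * (w^2 + w + 1) = w^3 - 1 := by ring
      rw [this, hw3, sub_self]
    rcases mul_eq_zero.mp hfac with h | h
    · exact absurd (by linear_combination h) hw1
    · exact h
  set t' : ZMod p := 2*w + 1 with ht'
  have ht'sq : t'^2 + 3 = 0 := by
    rw [ht']
    linear_combination 4 * hq
  refine ⟨(t'.val : ℤ), ?_⟩
  have : (((t'.val : ℤ)^2 + 3 : ℤ) : ZMod p) = 0 := by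
    push_cast
    rw [ZMod.natCast_val, ZMod.cast_id]
    exact_mod_cast ht'sq
  exact (ZMod.intCast_zmod_eq_zero_iff_dvd _ p).mp this

private lemma prime_rep (p : ℕ) (hp : p.Prime) (h12 : p % 12 = 1) :
    ∃ a b : ℤ, a^2 + 3*b^2 = (p:ℤ) := by
  have hp13 : 13 ≤ p := by
    have := hp.two_le
    omega
  obtain ⟨t, ht⟩ := exists_sqrt_neg3 p hp (by omega)
  set c := Int.bmod t p with hcdef
  have hca : (p:ℤ) ∣ t - c := by
    simpa [neg_sub] using (Int.dvd_bmod_sub_self (x := t) (m := p)).neg_right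
  have hpk : ∃ k : ℕ, p = 2*k+1 := ⟨p/2, by omega⟩
  obtain ⟨k, hk⟩ := hpk
  have hcle : c ≤ (k:ℤ) := by
    have := Int.bmod_le (x := t) (show 0 < p by omega)
    rw [← hcdef] at this; omega
  have hcge : -(k:ℤ) ≤ c := by
    have := Int.le_bmod (x := t) (show 0 < p by omega)
    rw [← hcdef] at this; omega
  clear_value c
  have hdvd : (p:ℤ) ∣ c^2 + 3 := by
    have h1 : (p:ℤ) ∣ (t^2+3) - (c^2+3) := by
      have hrw : (t^2+3) - (c^2+3) = (t-c)*(t+c) := by ring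
      rw [hrw]; exact hca.mul_right _
    have h3 := dvd_sub ht h1
    rwa [show t^2+3 - (t^2+3-(c^2+3)) = c^2+3 from by ring] at h3
  obtain ⟨M, hM⟩ := hdvd
  have hM0 : 0 < M := by
    rcases le_or_gt M 0 with h | h
    · exfalso
      have h1 : (p:ℤ) * M ≤ 0 := mul_nonpos_of_nonneg_of_nonpos (by positivity) h
      have h2 : 0 < c^2+3 := by positivity
      rw [hM] at h2; linarith
    · exact h
  have hc2 : c^2 ≤ (k:ℤ)^2 := sq_le_sq' hcge hcle
  have hk6 : (6:ℤ) ≤ (k:ℤ) := by exact_mod_cast (show 6 ≤ k by omega)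
  have hpk' : (p:ℤ) = 2*(k:ℤ)+1 := by push_cast [hk]; ring
  have hlt : (p:ℤ)*M < (p:ℤ)*(p:ℤ) := by
    rw [← hM]
    nlinarith
  have hMp : M < (p:ℤ) := lt_of_mul_lt_mul_left hlt (by positivity)
  obtain ⟨Mn, rfl⟩ : ∃ Mn : ℕ, M = (Mn:ℤ) := ⟨M.toNat, (Int.toNat_of_nonneg hM0.le).symm⟩
  exact descent p hp (by omega) Mn (by exact_mod_cast hM0) (by exact_mod_cast hMp) c 1
    (by push_cast; linear_combination hM)

private lemma primes_tuple : ∀ (m M : ℕ), ∃ (P : Fin m → ℕ) (A B : Fin m → ℤ),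
    (∀ i, M < P i) ∧ (Function.Injective P) ∧
    (∀ i, (P i).Prime ∧ (P i) % 12 = 1 ∧ (A i)^2 + 3*(B i)^2 = ((P i : ℕ) : ℤ)) := by
  intro m
  induction m with
  | zero => exact fun M => ⟨fun i => i.elim0, fun i => i.elim0, fun i => i.elim0,
      fun i => i.elim0, fun i j h => Subsingleton.elim i j, fun i => i.elim0⟩
  | succ m IH =>
    intro M
    obtain ⟨p, hp, hMp, hmod⟩ := Nat.exists_prime_gt_modEq_one (k := 12) M (by norm_num)
    have hp12 : p % 12 = 1 := by
      have := hmod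
      unfold Nat.ModEq at this
      omega
    obtain ⟨a, b, hab⟩ := prime_rep p hp hp12
    obtain ⟨P', A', B', hgt', hinj', hprop'⟩ := IH p
    refine ⟨Fin.cons p P', Fin.cons a A', Fin.cons b B', ?_, ?_, ?_⟩
    · intro i
      refine Fin.cases ?_ ?_ i
      · simpa using hMp
      · intro j
        simp only [Fin.cons_succ]
        exact lt_trans hMp (hgt' j)
    · intro i j hij
      rcases Fin.eq_zero_or_eq_succ i with rfl | ⟨i', rfl⟩ <;>
        rcases Fin.eq_zero_or_eq_succ j with rfl | ⟨j', rfl⟩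
      · rfl
      · simp only [Fin.cons_zero, Fin.cons_succ] at hij
        exact absurd hij (Nat.ne_of_lt (hgt' j'))
      · simp only [Fin.cons_zero, Fin.cons_succ] at hij
        exact absurd hij.symm (Nat.ne_of_lt (hgt' i'))
      · simp only [Fin.cons_succ] at hij
        exact congrArg Fin.succ (hinj' hij)
    · intro i
      refine Fin.cases ?_ ?_ i
      · simpa using ⟨hp, hp12, hab⟩
      · intro j
        simpa using hprop' j

private lemma rep_parity (p : ℕ) (hpm : p % 12 = 1) (a b : ℤ) (h : a^2+3*b^2 = (p:ℤ)) :
    a % 2 = 1 ∧ b % 2 = 0 ∧ ¬ (3:ℤ) ∣ a := by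
  have hp4 : (p:ℤ) % 4 = 1 := by omega
  have hp3 : (p:ℤ) % 3 = 1 := by omega
  refine ⟨?_, ?_, ?_⟩
  · obtain ⟨s, hs | hs⟩ := Int.even_or_odd' a
    · exfalso
      obtain ⟨t, ht | ht⟩ := Int.even_or_odd' b
      · obtain ⟨X, hX⟩ : ∃ X : ℤ, (p:ℤ) = 4*X := ⟨s^2+3*t^2, by rw [← h, hs, ht]; ring⟩
        omega
      · obtain ⟨X, hX⟩ : ∃ X : ℤ, (p:ℤ) = 4*X+3 := ⟨s^2+3*t^2+3*t, by rw [← h, hs, ht]; ring⟩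
        omega
    · omega
  · obtain ⟨t, ht | ht⟩ := Int.even_or_odd' b
    · omega
    · exfalso
      obtain ⟨s, hs | hs⟩ := Int.even_or_odd' a
      · obtain ⟨X, hX⟩ : ∃ X : ℤ, (p:ℤ) = 4*X+3 := ⟨s^2+3*t^2+3*t, by rw [← h, hs, ht]; ring⟩
        omega
      · obtain ⟨X, hX⟩ : ∃ X : ℤ, (p:ℤ) = 4*X := ⟨s^2+s+3*t^2+3*t+1, by rw [← h, hs, ht]; ring⟩
        omega
  · rintro ⟨u, hu⟩
    obtain ⟨X, hX⟩ : ∃ X : ℤ, (p:ℤ) = 3*X := ⟨3*u^2+b^2, by rw [← h, hu]; ring⟩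
    omega

private lemma rep_nz (p : ℕ) [hfp : Fact p.Prime] (hgt : 7 < p) (a b : ℤ)
    (h : a^2+3*b^2 = (p:ℤ)) : (a : ZMod p) ≠ 0 ∧ (b : ZMod p) ≠ 0 := by
  have hboth : ¬ ((a : ZMod p) = 0 ∧ (b : ZMod p) = 0) := by
    rintro ⟨ha, hb⟩
    obtain ⟨a1, ha1⟩ := (ZMod.intCast_zmod_eq_zero_iff_dvd a p).mp ha
    obtain ⟨b1, hb1⟩ := (ZMod.intCast_zmod_eq_zero_iff_dvd b p).mp hb
    have h' := h
    rw [ha1, hb1] at h'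
    have hcancel : (p:ℤ) * ((p:ℤ)*(a1^2+3*b1^2)) = (p:ℤ) * 1 := by
      linear_combination h' 
    have hp0 : (p:ℤ) ≠ 0 := by
      have := hfp.out.two_le; positivity
    have : (p:ℤ) ∣ 1 := ⟨a1^2+3*b1^2, (mul_left_cancel₀ hp0 hcancel).symm⟩
    have := Int.le_of_dvd one_pos this
    have := hfp.out.two_le
    omega
  have heq0 : (a : ZMod p)^2 + 3*(b : ZMod p)^2 = 0 := by
    have := congrArg (fun z : ℤ => (z : ZMod p)) h
    push_cast at this
    rwa [ZMod.natCast_self] at this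
  have h3ne : (3 : ZMod p) ≠ 0 := by
    intro h3
    have : (p:ℕ) ∣ 3 := by
      have : ((3:ℕ) : ZMod p) = 0 := by exact_mod_cast h3
      exact (ZMod.natCast_eq_zero_iff 3 p).mp this
    have := Nat.le_of_dvd (by norm_num) this
    omega
  constructor
  · intro ha
    refine hboth ⟨ha, ?_⟩
    rw [ha] at heq0
    have : (3:ZMod p) * (b:ZMod p)^2 = 0 := by linear_combination heq0
    rcases mul_eq_zero.mp this with h' | h'
    · exact absurd h' h3ne
    · exact pow_eq_zero_iff (by norm_num) |>.mp h'
  · intro hb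
    refine hboth ⟨?_, hb⟩
    rw [hb] at heq0
    have : (a:ZMod p)^2 = 0 := by linear_combination heq0
    exact pow_eq_zero_iff (by norm_num) |>.mp this

theorem stmt_11 (n : ℕ) (hn : 0 < n) :
    ∃ f : Fin n → ℤ × ℤ, Function.Injective f ∧
      (∀ i j : Fin n,
        (f i).1 ^ 2 + 12 * (f i).2 ^ 2 = (f j).1 ^ 2 + 12 * (f j).2 ^ 2) ∧
      ∀ i : Fin n, IsCoprime (f i).1 (f i).2 ∧ 4 ∣ (f i).1 ∧ ¬ (3 ∣ (f i).1) := by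
  classical
  obtain ⟨P, A, B, hgt, hinj, hprop⟩ := primes_tuple n 7
  have hPp : ∀ i, (P i).Prime := fun i => (hprop i).1
  have hP12 : ∀ i, (P i) % 12 = 1 := fun i => (hprop i).2.1
  have hrep : ∀ i, (A i)^2 + 3*(B i)^2 = ((P i):ℤ) := fun i => (hprop i).2.2
  have hpar : ∀ i, A i % 2 = 1 ∧ B i % 2 = 0 ∧ ¬(3:ℤ) ∣ A i :=
    fun i => rep_parity (P i) (hP12 i) _ _ (hrep i)
  set π : Fin n → ℤ√(-3) := fun j => ⟨A j, B j⟩ with hπdef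
  set γ : ℤ√(-3) := ⟨2, 1⟩ with hγdef
  set g : Fin n → Fin n → ℤ√(-3) := fun i j => if i = j then star (π j) else π j with hgdef
  set β : Fin n → ℤ√(-3) := fun i => γ * ∏ j, g i j with hβdef
  -- norms
  have hnormπ : ∀ j, Zsqrtd.norm (π j) = ((P j):ℤ) := by
    intro j
    rw [show Zsqrtd.norm (π j) = (A j)^2+3*(B j)^2 from by
      simp [Zsqrtd.norm, hπdef]; ring]
    exact hrep j
  have hnormg : ∀ i j, Zsqrtd.norm (g i j) = ((P j):ℤ) := by
    intro i j
    by_cases h : i = j <;> simp [hgdef, h, Zsqrtd.norm_conj, hnormπ]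
  have hnormγ : Zsqrtd.norm γ = 7 := by
    rw [show Zsqrtd.norm γ = 2*2 - (-3) * 1 * 1 from rfl]; norm_num
  have hnormβ : ∀ i, Zsqrtd.norm (β i) = 7 * ∏ j, ((P j):ℤ) := by
    intro i
    rw [hβdef, Zsqrtd.norm_mul, hnormγ]
    congr 1
    have := map_prod Zsqrtd.normMonoidHom (g i) Finset.univ
    simp only [Zsqrtd.normMonoidHom] at this
    rw [show Zsqrtd.norm (∏ j, g i j) = ∏ j, Zsqrtd.norm (g i j) from this]
    exact Finset.prod_congr rfl fun j _ => hnormg i j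
  -- parity and mod-3 facts for the product
  have hQ : ∀ i, (∏ j, g i j).re % 2 = 1 ∧ (∏ j, g i j).im % 2 = 0 ∧
      ¬ (3:ℤ) ∣ (∏ j, g i j).re := by
    intro i
    refine Finset.prod_induction (g i)
      (fun z => z.re % 2 = 1 ∧ z.im % 2 = 0 ∧ ¬ (3:ℤ) ∣ z.re) ?_ ?_ ?_
    · rintro x y ⟨hx1, hx2, hx3⟩ ⟨hy1, hy2, hy3⟩
      obtain ⟨a, ha⟩ : ∃ a, x.re = 2*a+1 := ⟨(x.re-1)/2, by omega⟩
      obtain ⟨b, hb⟩ : ∃ b, x.im = 2*b := ⟨x.im/2, by omega⟩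
      obtain ⟨c, hc⟩ : ∃ c, y.re = 2*c+1 := ⟨(y.re-1)/2, by omega⟩
      obtain ⟨d, hd⟩ : ∃ d, y.im = 2*d := ⟨y.im/2, by omega⟩
      refine ⟨?_, ?_, ?_⟩
      · rw [show (x*y).re = 1 + 2*(2*a*c+a+c-6*b*d) from by
          rw [Zsqrtd.re_mul, ha, hb, hc, hd]; ring, Int.add_mul_emod_self_left]
        norm_num
      · rw [show (x*y).im = 2*(2*a*d+d+2*b*c+b) from by
          rw [Zsqrtd.im_mul, ha, hb, hc, hd]; ring, Int.mul_emod_right]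
      · intro hdvd
        rw [Zsqrtd.re_mul] at hdvd
        have h2 : (3:ℤ) ∣ (-3) * x.im * y.im := ⟨-(x.im*y.im), by ring⟩
        have h1 : (3:ℤ) ∣ x.re * y.re := by
          have h3 := dvd_sub hdvd h2
          rwa [show x.re*y.re + (-3)*x.im*y.im - (-3)*x.im*y.im = x.re*y.re from by ring]
            at h3
        rcases (Int.prime_three.dvd_mul).mp h1 with h | h
        · exact hx3 h
        · exact hy3 h
    · refine ⟨by simp, by simp, ?_⟩
      simp only [Zsqrtd.re_one]
      omega
    · intro j _
      by_cases h : i = j <;>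
        simp only [hgdef, h, if_pos, if_neg, hπdef, Zsqrtd.star_mk, ite_true, ite_false]
      · exact ⟨(hpar j).1, by have := (hpar j).2.1; omega, (hpar j).2.2⟩
      · exact ⟨(hpar j).1, (hpar j).2.1, (hpar j).2.2⟩
  have hβre : ∀ i, (β i).re = 2 * (∏ j, g i j).re - 3 * (∏ j, g i j).im := by
    intro i
    rw [hβdef, Zsqrtd.re_mul, hγdef]
    ring
  have hβim : ∀ i, (β i).im = 2 * (∏ j, g i j).im + (∏ j, g i j).re := by
    intro i
    rw [hβdef, Zsqrtd.im_mul, hγdef]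
    ring
  have hβinj : Function.Injective β := by
    intro i k hik
    by_contra hne
    haveI : Fact (P i).Prime := ⟨hPp i⟩
    obtain ⟨hA0, hB0⟩ := rep_nz (P i) (hgt i) (A i) (B i) (hrep i)
    have heq0 : ((A i : ZMod (P i)))^2 + 3*((B i : ZMod (P i)))^2 = 0 := by
      have := congrArg (fun z : ℤ => (z : ZMod (P i))) (hrep i)
      push_cast at this
      rwa [ZMod.natCast_self] at this
    set t : ZMod (P i) := -(A i : ZMod (P i)) * ((B i : ZMod (P i)))⁻¹ with htdef
    have hA2eq : ((A i : ZMod (P i)))^2 = -3 * ((B i : ZMod (P i)))^2 := by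
      linear_combination heq0
    have hBB : (B i : ZMod (P i)) * ((B i : ZMod (P i)))⁻¹ = 1 := mul_inv_cancel₀ hB0
    have ht : t * t = ((-3 : ℤ) : ZMod (P i)) := by
      have hcast : ((-3 : ℤ) : ZMod (P i)) = -3 := by push_cast; ring
      rw [hcast]
      calc t*t = ((A i : ZMod (P i)))^2 * (((B i : ZMod (P i)))⁻¹)^2 := by
            rw [htdef]; ring
        _ = -3 * ((B i : ZMod (P i)) * ((B i : ZMod (P i)))⁻¹)^2 := by
            rw [hA2eq]; ring
        _ = -3 := by rw [hBB]; ring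
    set e : ℤ√(-3) →+* ZMod (P i) := Zsqrtd.lift ⟨t, ht⟩ with hedef
    have happly : ∀ z : ℤ√(-3), e z = (z.re : ZMod (P i)) + (z.im : ZMod (P i)) * t :=
      fun z => by rw [hedef]; simp
    have heπi : e (π i) = 0 := by
      rw [happly]
      simp only [hπdef]
      rw [htdef]
      field_simp
      ring
    have two_ne : (2 : ZMod (P i)) ≠ 0 := by
      intro h
      have h1 : ((2:ℕ) : ZMod (P i)) = 0 := by exact_mod_cast h
      have h2 := (ZMod.natCast_eq_zero_iff 2 (P i)).mp h1
      have h3 := Nat.le_of_dvd (by norm_num) h2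
      have := hgt i
      omega
    have hestar : e (star (π i)) ≠ 0 := by
      have hsum : e (π i) + e (star (π i)) = 2 * (A i : ZMod (P i)) := by
        rw [happly, happly]
        simp only [hπdef, Zsqrtd.re_star, Zsqrtd.im_star]
        push_cast
        ring
      rw [heπi, zero_add] at hsum
      rw [hsum]
      exact mul_ne_zero two_ne hA0
    have hPne : ∀ j, j ≠ i → ((P j : ℕ) : ZMod (P i)) ≠ 0 := by
      intro j hji h0
      have h1 := (ZMod.natCast_eq_zero_iff _ _).mp h0
      have h2 := (Nat.prime_dvd_prime_iff_eq (hPp i) (hPp j)).mp h1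
      exact hji (hinj h2).symm
    have hγne : e γ ≠ 0 := by
      intro h0
      have h1 : e γ * e (star γ) = ((7:ℤ) : ZMod (P i)) := by
        rw [← map_mul, ← Zsqrtd.norm_eq_mul_conj, hnormγ, map_intCast]
      rw [h0, zero_mul] at h1
      have h2 : ((7:ℕ) : ZMod (P i)) = 0 := by exact_mod_cast h1.symm
      have h3 := (ZMod.natCast_eq_zero_iff 7 (P i)).mp h2
      have h4 := Nat.le_of_dvd (by norm_num) h3
      have := hgt i
      omega
    have hgne : ∀ j, e (g i j) ≠ 0 := by
      intro j
      by_cases hj : i = j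
      · subst hj
        have hval : g i i = star (π i) := by simp [hgdef]
        rw [hval]
        exact hestar
      · have hval : g i j = π j := by simp [hgdef, hj]
        rw [hval]
        intro h0
        have hprod : e (π j) * e (star (π j)) = ((P j : ℤ) : ZMod (P i)) := by
          rw [← map_mul, ← Zsqrtd.norm_eq_mul_conj, hnormπ, map_intCast]
        rw [h0, zero_mul] at hprod
        have : ((P j : ℕ) : ZMod (P i)) = 0 := by exact_mod_cast hprod.symm
        exact hPne j (fun h => hj h.symm) this
    have h1 : e (β i) ≠ 0 := by
      have hbv : β i = γ * ∏ j, g i j := by rw [hβdef]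
      rw [hbv, map_mul, map_prod]
      exact mul_ne_zero hγne (Finset.prod_ne_zero_iff.mpr fun j _ => hgne j)
    have h2 : e (β k) = 0 := by
      have hbv : β k = γ * ∏ j, g k j := by rw [hβdef]
      rw [hbv, map_mul, map_prod]
      have hz : e (g k i) = 0 := by
        have hval : g k i = π i := by
          simp only [hgdef]
          rw [if_neg (fun h => hne h.symm)]
        rw [hval]
        exact heπi
      rw [Finset.prod_eq_zero (Finset.mem_univ i) hz, mul_zero]
    rw [hik] at h1
    exact h1 h2
  have hnormval : ∀ i, (β i).re^2 + 3*(β i).im^2 = 7 * ∏ j, ((P j):ℤ) := by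
    intro i
    rw [← hnormβ i]
    simp [Zsqrtd.norm]
    ring
  refine ⟨fun i => (2 * (β i).re, (β i).im), ?_, ?_, ?_⟩
  · intro i k h
    have h1 : 2 * (β i).re = 2 * (β k).re := congrArg Prod.fst h
    have h2 : (β i).im = (β k).im := congrArg Prod.snd h
    exact hβinj (Zsqrtd.ext (by omega) h2)
  · intro i j
    have key : ∀ i, (2*(β i).re)^2 + 12*((β i).im)^2 = 4 * (7 * ∏ j, ((P j):ℤ)) := by
      intro i
      rw [show (2*(β i).re)^2 + 12*((β i).im)^2 = 4*((β i).re^2+3*(β i).im^2) from by ring,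
        hnormval]
    simp only []
    rw [key i, key j]
  · intro i
    have him : (β i).im % 2 = 1 := by
      have hq := hQ i
      have hb := hβim i
      omega
    refine ⟨?_, ?_, ?_⟩
    · -- coprime
      rw [Int.isCoprime_iff_gcd_eq_one]
      by_contra hg
      have hg0 : Int.gcd (2*(β i).re) ((β i).im) ≠ 0 := by
        intro h0
        have h1 := Int.gcd_eq_zero_iff.mp h0
        omega
      obtain ⟨l, hlp, hldvd⟩ := Nat.exists_prime_and_dvd hg
      have d1 : (l:ℤ) ∣ 2*(β i).re :=
        dvd_trans (Int.natCast_dvd_natCast.mpr hldvd) (Int.gcd_dvd_left _ _)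
      have d2 : (l:ℤ) ∣ (β i).im :=
        dvd_trans (Int.natCast_dvd_natCast.mpr hldvd) (Int.gcd_dvd_right _ _)
      have hl2 : l ≠ 2 := by
        intro h2
        subst h2
        obtain ⟨u, hu⟩ := d2
        omega
      have hlre : (l:ℤ) ∣ (β i).re := by
        rcases (Nat.prime_iff_prime_int.mp hlp).dvd_mul.mp d1 with h | h
        · exfalso
          have h1 : (l:ℕ) ∣ 2 := by exact_mod_cast h
          have h2 := Nat.le_of_dvd (by norm_num) h1
          have h3 := hlp.two_le
          omega
        · exact h
      have hsqdvd : (l:ℤ)^2 ∣ 7 * ∏ j, ((P j):ℤ) := by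
        rw [← hnormval i]
        obtain ⟨u, hu⟩ := hlre
        obtain ⟨v, hv⟩ := d2
        exact ⟨u^2+3*v^2, by rw [hu, hv]; ring⟩
      have hnatdvd : l^2 ∣ 7 * ∏ j, P j := by
        have hcast : ((7 * ∏ j, P j : ℕ) : ℤ) = 7 * ∏ j, ((P j):ℤ) := by push_cast; ring
        rw [← hcast] at hsqdvd
        exact_mod_cast hsqdvd
      have h1 : l ∣ 7 * ∏ j, P j := dvd_trans (dvd_pow_self l two_ne_zero) hnatdvd
      rcases (Nat.Prime.dvd_mul hlp).mp h1 with h7 | hpr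
      · have hl7 : l = 7 := (Nat.prime_dvd_prime_iff_eq hlp (by norm_num)).mp h7
        subst hl7
        obtain ⟨u, hu⟩ := hnatdvd
        have h7p : 7 ∣ ∏ j, P j := ⟨u, by omega⟩
        obtain ⟨j, -, hj⟩ := (Prime.dvd_finset_prod_iff hlp.prime _).mp h7p
        have h8 := (Nat.prime_dvd_prime_iff_eq (by norm_num) (hPp j)).mp hj
        have := hgt j
        omega
      · obtain ⟨j, -, hj⟩ := (Prime.dvd_finset_prod_iff hlp.prime _).mp hpr
        have hlj : l = P j := (Nat.prime_dvd_prime_iff_eq hlp (hPp j)).mp hj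
        subst hlj
        rw [← Finset.mul_prod_erase _ _ (Finset.mem_univ j)] at hnatdvd
        obtain ⟨u, hu⟩ := hnatdvd
        have hPj0 : 0 < P j := (hPp j).pos
        have hdvd2 : P j ∣ 7 * ∏ x ∈ Finset.univ.erase j, P x := by
          refine ⟨u, ?_⟩
          refine Nat.eq_of_mul_eq_mul_left hPj0 ?_
          rw [show P j * (7 * ∏ x ∈ Finset.univ.erase j, P x)
              = 7 * (P j * ∏ x ∈ Finset.univ.erase j, P x) from by ring, hu]
          ring
        rcases (Nat.Prime.dvd_mul (hPp j)).mp hdvd2 with h7' | hpr'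
        · have h8 := Nat.le_of_dvd (by norm_num) h7'
          have := hgt j
          omega
        · obtain ⟨k', hk'mem, hk'⟩ := (Prime.dvd_finset_prod_iff (hPp j).prime _).mp hpr'
          have heq := (Nat.prime_dvd_prime_iff_eq (hPp j) (hPp k')).mp hk'
          have hjk : j = k' := hinj heq
          exact (Finset.ne_of_mem_erase hk'mem) hjk.symm
    · -- 4 ∣ 2 * re
      show (4:ℤ) ∣ 2 * (β i).re
      have hq := hQ i
      have hb := hβre i
      omega
    · -- ¬ 3 ∣ 2 * re
      show ¬ (3:ℤ) ∣ 2 * (β i).re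
      have hq := hQ i
      have hb := hβre i
      omega
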